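/- Large scale decomposition of test functions: fix r ∈ ℕ₀ and c ∈ ℕ₀ ∪ {−1}. There exists a constant cst > 0 depending only on r, c and d such that for every test function ψ ∈ 𝓑^r and every M ∈ ℕ₀, one can write ψ = (ψ̃^{[M]})^{2^M} + Σ_{n=0}^{M} (ψ̌^{[n]})^{2^n} for suitable test functions ψ̃^{[M]} ∈ cst·𝓑^r and ψ̌^{[n]} ∈ cst·𝓑^r_c for 0 ≤ n ≤ M (here φ^λ := φ_0^λ denotes the rescaling at scale λ centred at the origin, and 𝓑^r_c consists of elements of 𝓑^r annihilating all monomials of degree ≤ c). -/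

import Mathlib

open MeasureTheory Metric Filter
open scoped Classical Pointwise Topology

noncomputable section

/-- Euclidean space `ℝ^d`. -/
abbrev Ed (d : ℕ) := EuclideanSpace ℝ (Fin d)

/-- Multi-indices `k ∈ ℕ₀^d`. -/
abbrev MIdx (d : ℕ) := Fin d → ℕ

variable {d : ℕ}

/-- Degree `|k|` of a multi-index. -/
def mdeg (k : MIdx d) : ℕ := ∑ i, k i

/-- Factorial `k!` of a multi-index. -/
def mfact (k : MIdx d) : ℕ := ∏ i, Nat.factorial (k i)

/-- Monomial `v^k`. -/
def mpow (v : Ed d) (k : MIdx d) : ℝ := ∏ i, (v i) ^ (k i)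

/-- Partial (line) derivative in coordinate `i`. -/
def pd (i : Fin d) (f : Ed d → ℝ) : Ed d → ℝ :=
  fun x => lineDeriv ℝ f x (EuclideanSpace.single i (1:ℝ))

/-- Iterated partial derivative `∂^k`. -/
def mderiv (k : MIdx d) (f : Ed d → ℝ) : Ed d → ℝ :=
  (List.finRange d).foldr (fun i g => (pd i)^[k i] g) f

/-- Smooth compactly supported test function. -/
def IsTest (φ : Ed d → ℝ) : Prop := ContDiff ℝ (⊤ : ℕ∞) φ ∧ HasCompactSupport φ

/-- The `C^r` norm `max_{|k| ≤ r} ‖∂^k φ‖_∞`. -/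
def crNorm (r : ℕ) (φ : Ed d → ℝ) : ℝ :=
  ⨆ k : {k : MIdx d // mdeg k ≤ r}, ⨆ x : Ed d, |mderiv k.1 φ x|

/-- Generalized functions: arbitrary functionals on functions on `ℝ^d`. -/
abbrev DFunc (d : ℕ) := (Ed d → ℝ) → ℝ

/-- `f` is a distribution in `𝒟'(ℝ^d)`: linear on test functions and,
on every compact, bounded by some `C^r` norm. -/
def IsDistribution (f : DFunc d) : Prop :=
  (∀ φ ψ : Ed d → ℝ, IsTest φ → IsTest ψ → f (φ + ψ) = f φ + f ψ) ∧
  (∀ (c : ℝ) (φ : Ed d → ℝ), IsTest φ → f (c • φ) = c * f φ) ∧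
  (∀ K : Set (Ed d), IsCompact K → ∃ (r : ℕ) (C : ℝ),
    ∀ φ : Ed d → ℝ, IsTest φ → tsupport φ ⊆ K → |f φ| ≤ C * crNorm r φ)

/-- `f` is a distribution of order `r` (bound by the `C^r` norm on every compact). -/
def DistOrder (f : DFunc d) (r : ℕ) : Prop :=
  ∀ K : Set (Ed d), IsCompact K → ∃ C : ℝ,
    ∀ φ : Ed d → ℝ, IsTest φ → tsupport φ ⊆ K → |f φ| ≤ C * crNorm r φ

/-- `φ` is of class `C^r`: all iterated coordinate-partials up to order `r`
exist and are continuous. -/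
def IsCr (r : ℕ) (φ : Ed d → ℝ) : Prop :=
  ∀ k : MIdx d, mdeg k ≤ r →
    Continuous (mderiv k φ) ∧
    (mdeg k < r → ∀ (i : Fin d) (x : Ed d),
      LineDifferentiableAt ℝ (mderiv k φ) x (EuclideanSpace.single i (1:ℝ)))

/-- The functional `f` acts canonically (linearly, with local order-`r` bounds) on all
compactly supported `C^r` functions; i.e. `f` incorporates the canonical extension of a
distribution of order `r`. -/
def OrderExt (f : DFunc d) (r : ℕ) : Prop :=
  (∀ φ ψ : Ed d → ℝ, IsCr r φ → HasCompactSupport φ → IsCr r ψ → HasCompactSupport ψ →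
      f (φ + ψ) = f φ + f ψ) ∧
  (∀ (c : ℝ) (φ : Ed d → ℝ), IsCr r φ → HasCompactSupport φ → f (c • φ) = c * f φ) ∧
  (∀ K : Set (Ed d), IsCompact K → ∃ C : ℝ,
    ∀ φ : Ed d → ℝ, IsCr r φ → HasCompactSupport φ → tsupport φ ⊆ K → |f φ| ≤ C * crNorm r φ)

/-- The scaled recentred test function `φ_x^λ(y) = λ^{-d} φ(λ^{-1}(y-x))`. -/
def scTF (φ : Ed d → ℝ) (x : Ed d) (l : ℝ) : Ed d → ℝ :=
  fun y => (l ^ d)⁻¹ * φ (l⁻¹ • (y - x))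

/-- The class `𝓑^r` of smooth test functions supported in the closed unit ball with
all derivatives of order `≤ r` bounded by one. -/
def TB (d r : ℕ) : Set (Ed d → ℝ) :=
  {φ | IsTest φ ∧ tsupport φ ⊆ closedBall (0 : Ed d) 1 ∧
    ∀ k : MIdx d, mdeg k ≤ r → ∀ x, |mderiv k φ x| ≤ 1}

/-- The class `𝓑_γ` of smooth test functions supported in the closed unit ball which
annihilate all monomials of degree `≤ γ`. -/
def TAnn (d : ℕ) (γ : ℝ) : Set (Ed d → ℝ) :=
  {φ | IsTest φ ∧ tsupport φ ⊆ closedBall (0 : Ed d) 1 ∧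
    ∀ k : MIdx d, (mdeg k : ℝ) ≤ γ → (∫ z, φ z * mpow z k) = 0}

/-- The class `𝓑^r_γ = 𝓑^r ∩ 𝓑_γ`. -/
def TBAnn (d r : ℕ) (γ : ℝ) : Set (Ed d → ℝ) := TB d r ∩ TAnn d γ

/-- A germ: a family of functionals indexed by base points. -/
abbrev GermF (d : ℕ) := Ed d → DFunc d

/-- A germ of distributions, measurable in the base point. -/
def IsGerm (F : GermF d) : Prop :=
  (∀ x, IsDistribution (F x)) ∧ ∀ φ : Ed d → ℝ, IsTest φ → Measurable (fun x => F x φ)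

/-- Homogeneity bound with constant `C`: `|F_x(φ_x^λ)| ≤ C λ^ᾱ` on `(K, λ̄)` at order `r`. -/
def HomB (F : GermF d) (a : ℝ) (r : ℕ) (K : Set (Ed d)) (lb C : ℝ) : Prop :=
  ∀ x ∈ K, ∀ l : ℝ, 0 < l → l ≤ lb → ∀ φ ∈ TB d r, |F x (scTF φ x l)| ≤ C * l ^ a

/-- Coherence bound with constant `C`:
`|(F_y - F_x)(φ_x^λ)| ≤ C λ^α (|y-x|+λ)^{γ-α}` on `(K, λ̄)` at order `r`. -/
def CohB (F : GermF d) (a g : ℝ) (r : ℕ) (K : Set (Ed d)) (lb C : ℝ) : Prop :=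
  ∀ x ∈ K, ∀ y ∈ K, ∀ l : ℝ, 0 < l → l ≤ lb → ∀ φ ∈ TB d r,
    |F y (scTF φ x l) - F x (scTF φ x l)| ≤ C * l ^ a * (dist y x + l) ^ (g - a)

/-- `F` is `ᾱ`-homogeneous of order `r`. -/
def Homog (F : GermF d) (a : ℝ) (r : ℕ) : Prop :=
  ∀ K : Set (Ed d), IsCompact K → ∀ lb : ℝ, 1 ≤ lb → ∃ C, HomB F a r K lb C

/-- `F` is `(α, γ)`-coherent of order `r`. -/
def Coh (F : GermF d) (a g : ℝ) (r : ℕ) : Prop :=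
  ∀ K : Set (Ed d), IsCompact K → ∀ lb : ℝ, 1 ≤ lb → ∃ C, CohB F a g r K lb C

/-- Weak homogeneity bound with constant `C` (test functions annihilating polynomials
at small scales, plus a scale-one bound on all of `𝓑^r`). -/
def WHomB (F : GermF d) (a : ℝ) (r : ℕ) (K : Set (Ed d)) (lb C : ℝ) : Prop :=
  (∀ x ∈ K, ∀ l : ℝ, 0 < l → l ≤ lb → ∀ φ ∈ TBAnn d r a,
      |F x (scTF φ x l)| ≤ C * l ^ a) ∧
  (∀ x ∈ K, ∀ ψ ∈ TB d r, |F x (scTF ψ x 1)| ≤ C)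

/-- Weak coherence bound with constant `C`. -/
def WCohB (F : GermF d) (a g : ℝ) (r : ℕ) (K : Set (Ed d)) (lb C : ℝ) : Prop :=
  (∀ x ∈ K, ∀ y ∈ K, ∀ l : ℝ, 0 < l → l ≤ lb → ∀ φ ∈ TBAnn d r g,
      |F y (scTF φ x l) - F x (scTF φ x l)| ≤ C * l ^ a * (dist y x + l) ^ (g - a)) ∧
  (∀ x ∈ K, ∀ y ∈ K, ∀ ψ ∈ TB d r, |F y (scTF ψ x 1) - F x (scTF ψ x 1)| ≤ C)

/-- `F` is weakly `ᾱ`-homogeneous of order `r`. -/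
def WHomog (F : GermF d) (a : ℝ) (r : ℕ) : Prop :=
  ∀ K : Set (Ed d), IsCompact K → ∀ lb : ℝ, 1 ≤ lb → ∃ C, WHomB F a r K lb C

/-- `F` is weakly `(α,γ)`-coherent of order `r`. -/
def WCoh (F : GermF d) (a g : ℝ) (r : ℕ) : Prop :=
  ∀ K : Set (Ed d), IsCompact K → ∀ lb : ℝ, 1 ≤ lb → ∃ C, WCohB F a g r K lb C

/-- The canonical order `r_{ᾱ,α} = min{n ∈ ℕ₀ : n > max(-ᾱ, -α)}`. -/
def rJ (a b : ℝ) : ℕ := (⌊max (-a) (-b)⌋ + 1).toNat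

/-- Joint homogeneity-and-coherence bound at the canonical order. -/
def JointB (F : GermF d) (ab a g : ℝ) (K : Set (Ed d)) (lb C : ℝ) : Prop :=
  HomB F ab (rJ ab a) K lb C ∧ CohB F a g (rJ ab a) K lb C

/-- Joint weak homogeneity-and-coherence bound at the canonical order. -/
def WJointB (F : GermF d) (ab a g : ℝ) (K : Set (Ed d)) (lb C : ℝ) : Prop :=
  WHomB F ab (rJ ab a) K lb C ∧ WCohB F a g (rJ ab a) K lb C

/-- `R` is a `γ`-reconstruction of the `(α,γ)`-coherent germ `F`. -/
def IsRec (F : GermF d) (R : DFunc d) (a g : ℝ) : Prop :=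
  ∀ r : ℕ, -a < (r : ℝ) → ∀ K : Set (Ed d), IsCompact K → ∃ C : ℝ,
    ∀ x ∈ K, ∀ l : ℝ, 0 < l → l ≤ 1 → ∀ φ ∈ TB d r,
      |F x (scTF φ x l) - R (scTF φ x l)| ≤ C * l ^ g

/-- Mixed partial derivative `∂_1^k ∂_2^l K(x,y)` of a kernel. -/
def mixDeriv (k l : MIdx d) (Kf : Ed d → Ed d → ℝ) (x y : Ed d) : ℝ :=
  mderiv k (fun x' => mderiv l (fun y' => Kf x' y') y) x

/-- The kernel `K(x,y)` is of class `C^{m,r}` (mixed partials `∂_1^k ∂_2^l`, `|k| ≤ m`,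
`|l| ≤ r`, exist and are continuous). -/
def IsCmr (m r : ℕ) (Kf : Ed d → Ed d → ℝ) : Prop :=
  ∀ k l : MIdx d, mdeg k ≤ m → mdeg l ≤ r →
    Continuous (fun p : Ed d × Ed d => mixDeriv k l Kf p.1 p.2) ∧
    (mdeg k < m → ∀ (i : Fin d) (x y : Ed d),
      LineDifferentiableAt ℝ (fun x' => mixDeriv k l Kf x' y) x
        (EuclideanSpace.single i (1:ℝ))) ∧
    (mdeg l < r → ∀ (j : Fin d) (x y : Ed d),
      LineDifferentiableAt ℝ (mderiv l (fun y' => Kf x y')) y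
        (EuclideanSpace.single j (1:ℝ)))

/-- `Kn` is the dyadic decomposition of a `β`-regularising kernel of order `(m,r)`
with range `ρ` (Definition 2.3 of the paper). -/
def RegKer (d : ℕ) (β : ℝ) (m r : ℕ) (ρ : ℝ) (Kn : ℕ → Ed d → Ed d → ℝ) : Prop :=
  (∀ n, IsCmr m r (Kn n)) ∧
  (∀ n x y, Kn n x y ≠ 0 → dist x y ≤ ρ * 2 ^ (-(n : ℝ))) ∧
  (∀ K : Set (Ed d), IsCompact K → ∃ c : ℝ, 0 < c ∧
    (∀ n, ∀ k l : MIdx d, mdeg k ≤ m → mdeg l ≤ r → ∀ x ∈ K, ∀ y ∈ K,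
      |mixDeriv k l (Kn n) x y| ≤
        c * 2 ^ ((((d : ℝ) - β + (mdeg l : ℝ) + (mdeg k : ℝ))) * n)) ∧
    (∀ n, ∀ k l : MIdx d, mdeg k ≤ r → mdeg l ≤ r → ∀ y ∈ K,
      |∫ x, mpow (y - x) l * mderiv k (fun y' => Kn n x y') y| ≤ c * 2 ^ (-(β * (n : ℝ)))))

/-- `K_n^* ψ (y) = ∫ ψ(x) K_n(x,y) dx`. -/
def kstar (Kf : Ed d → Ed d → ℝ) (ψ : Ed d → ℝ) : Ed d → ℝ :=
  fun y => ∫ x, ψ x * Kf x y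

/-- `g = 𝖪 f`, i.e. `g(ψ) = Σ_n f(K_n^* ψ)` (with convergence) on test functions. -/
def KInt (Kn : ℕ → Ed d → Ed d → ℝ) (f g : DFunc d) : Prop :=
  ∀ ψ : Ed d → ℝ, IsTest ψ → HasSum (fun n => f (kstar (Kn n) ψ)) (g ψ)

/-- The kernel decomposition preserves polynomials at level `γ`. -/
def PresPoly (Kn : ℕ → Ed d → Ed d → ℝ) (γ : ℝ) : Prop :=
  ∀ n, ∀ k : MIdx d, (mdeg k : ℝ) ≤ γ →
    ∃ p : MvPolynomial (Fin d) ℝ, p.totalDegree ≤ mdeg k ∧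
      ∀ x : Ed d, (∫ y, Kn n x y * mpow y k) = MvPolynomial.eval (fun i => x i) p

/-- Distributional derivative `D^k f (φ) = (-1)^{|k|} f(∂^k φ)`. -/
def distDeriv (k : MIdx d) (f : DFunc d) : DFunc d :=
  fun φ => (-1 : ℝ) ^ (mdeg k) * f (mderiv k φ)

/-- `η ∈ 𝒟` with `∫ η = 1` and vanishing moments of orders `1 ≤ |l| < δ`. -/
def GoodEta (δ : ℝ) (η : Ed d → ℝ) : Prop :=
  IsTest η ∧ (∫ z, η z) = 1 ∧
    ∀ k : MIdx d, 1 ≤ mdeg k → (mdeg k : ℝ) < δ → (∫ z, η z * mpow z k) = 0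

/-- `v` is the pointwise derivative `D^k f(x)`, defined through the limit
`lim_{λ↓0} D^k f(η_x^λ)` for every admissible mollifier `η`. -/
def HasPtDeriv (f : DFunc d) (δ : ℝ) (k : MIdx d) (x : Ed d) (v : ℝ) : Prop :=
  ∀ η : Ed d → ℝ, GoodEta δ η →
    Tendsto (fun l : ℝ => distDeriv k f (scTF η x l)) (nhdsWithin 0 (Set.Ioi 0)) (nhds v)

/-- The Taylor polynomial `Σ_{|k| < δ} c_k (·-x)^k / k!`, viewed as the functional
`ψ ↦ Σ_{|k| < δ} c_k ∫ ψ(y) (y-x)^k / k! dy`. -/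
def taylorF (δ : ℝ) (c : MIdx d → ℝ) (x : Ed d) : DFunc d :=
  fun ψ => ∑ᶠ k ∈ {k : MIdx d | (mdeg k : ℝ) < δ},
    c k * ((∫ y, ψ y * mpow (y - x) k) / (mfact k))

/-- The smallest positive integer `> -γ` (used in Hölder–Zygmund spaces for `γ < 0`). -/
def rNeg (γ : ℝ) : ℕ := (⌊-γ + 1⌋).toNat

/-- The Hölder–Zygmund bound with constant `C` on the compact `K` (with `λ̄ = 1`). -/
def ZBound (γ : ℝ) (f : DFunc d) (K : Set (Ed d)) (C : ℝ) : Prop :=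
  (γ < 0 → ∀ x ∈ K, ∀ l : ℝ, 0 < l → l ≤ 1 → ∀ φ ∈ TB d (rNeg γ),
    |f (scTF φ x l)| ≤ C * l ^ γ) ∧
  (0 ≤ γ →
    (∀ x ∈ K, ∀ ψ ∈ TB d 0, |f (scTF ψ x 1)| ≤ C) ∧
    (∀ x ∈ K, ∀ l : ℝ, 0 < l → l ≤ 1 → ∀ φ ∈ TBAnn d 0 γ,
      |f (scTF φ x l)| ≤ C * l ^ γ))

/-- Membership in the local Hölder–Zygmund space `𝒵^γ`. -/
def MemZ (γ : ℝ) (f : DFunc d) : Prop :=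
  IsDistribution f ∧ ∀ K : Set (Ed d), IsCompact K → ∃ C, ZBound γ f K C

/-- `(Pg, Gg)` is a model with homogeneities `α` of order `rP`, with index set `S`. -/
def IsModelOn {ι : Type} (S : Finset ι) (Pg : ι → GermF d)
    (Gg : ι → ι → Ed d → Ed d → ℝ) (α : ι → ℝ) (rP : ℕ) : Prop :=
  (∀ i ∈ S, IsGerm (Pg i)) ∧
  (∀ i ∈ S, Homog (Pg i) (α i) rP) ∧
  (∀ i ∈ S, ∀ x y : Ed d, ∀ φ : Ed d → ℝ, IsTest φ →
    Pg i y φ = ∑ j ∈ S, Pg j x φ * Gg j i x y)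

/-- The modelled-distribution bound with constant `C` on the compact `K`. -/
def MDB {ι : Type} (S : Finset ι) (Gg : ι → ι → Ed d → Ed d → ℝ) (α : ι → ℝ)
    (γ : ℝ) (f : Ed d → ι → ℝ) (K : Set (Ed d)) (C : ℝ) : Prop :=
  (∀ x ∈ K, ∀ i ∈ S, |f x i| ≤ C) ∧
  (∀ x ∈ K, ∀ y ∈ K, ∀ i ∈ S,
    |(∑ j ∈ S, Gg i j x y * f y j) - f x i| ≤ C * (dist y x) ^ (γ - α i))

/-- `f` is a modelled distribution of order `γ` relative to the model data. -/
def IsMD {ι : Type} (S : Finset ι) (Gg : ι → ι → Ed d → Ed d → ℝ) (α : ι → ℝ)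
    (γ : ℝ) (f : Ed d → ι → ℝ) : Prop :=
  (∀ i ∈ S, Measurable fun x : Ed d => f x i) ∧
  ∀ K : Set (Ed d), IsCompact K → ∃ C, MDB S Gg α γ f K C

/-- The germ `⟨f, Π⟩_x = Σ_i f^i(x) Π^i_x`. -/
def germOf {ι : Type} (S : Finset ι) (Pg : ι → GermF d) (f : Ed d → ι → ℝ) : GermF d :=
  fun x φ => ∑ i ∈ S, f x i * Pg i x φ

section AuxLSD

lemma ContDiff.diff' {f : Ed d → ℝ} (hf : ContDiff ℝ (⊤:ℕ∞) f) : Differentiable ℝ f :=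
  hf.differentiable (by simp)

lemma pd_eq_fderiv {f : Ed d → ℝ} (hf : ContDiff ℝ (⊤:ℕ∞) f) (i : Fin d) :
    pd i f = fun x => fderiv ℝ f x (EuclideanSpace.single i (1:ℝ)) := by
  funext x
  exact (hf.diff' x).lineDeriv_eq_fderiv

lemma contDiff_pd {f : Ed d → ℝ} (hf : ContDiff ℝ (⊤:ℕ∞) f) (i : Fin d) :
    ContDiff ℝ (⊤:ℕ∞) (pd i f) := by
  rw [pd_eq_fderiv hf]
  exact (hf.fderiv_right (by simp)).clm_apply contDiff_const

lemma pd_add {f g : Ed d → ℝ} (hf : ContDiff ℝ (⊤:ℕ∞) f) (hg : ContDiff ℝ (⊤:ℕ∞) g) (i : Fin d) :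
    pd i (f + g) = pd i f + pd i g := by
  funext x
  have h1 : lineDeriv ℝ (f + g) x (EuclideanSpace.single i (1:ℝ))
      = fderiv ℝ (f + g) x (EuclideanSpace.single i (1:ℝ)) :=
    DifferentiableAt.lineDeriv_eq_fderiv (by exact (hf.diff' x).add (hg.diff' x))
  simp only [pd, Pi.add_apply, h1,
    (hf.diff' x).lineDeriv_eq_fderiv, (hg.diff' x).lineDeriv_eq_fderiv]
  rw [fderiv_add (hf.diff' x) (hg.diff' x)]
  rfl

lemma pd_smul {f : Ed d → ℝ} (hf : ContDiff ℝ (⊤:ℕ∞) f) (a : ℝ) (i : Fin d) :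
    pd i (a • f) = a • pd i f := by
  funext x
  have h1 : lineDeriv ℝ (a • f) x (EuclideanSpace.single i (1:ℝ))
      = fderiv ℝ (a • f) x (EuclideanSpace.single i (1:ℝ)) :=
    DifferentiableAt.lineDeriv_eq_fderiv (by exact (hf.diff' x).const_smul a)
  simp only [pd, Pi.smul_apply, h1, (hf.diff' x).lineDeriv_eq_fderiv]
  rw [fderiv_const_smul (hf.diff' x)]
  rfl

lemma pd_zero (i : Fin d) : pd i (0 : Ed d → ℝ) = 0 := by
  funext x
  simp [pd, lineDeriv]

lemma tsupport_pd_subset (f : Ed d → ℝ) (i : Fin d) :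
    tsupport (pd i f) ⊆ tsupport f := by
  apply closure_minimal _ (isClosed_tsupport f)
  intro x hx
  by_contra hxn
  have hopen : IsOpen (tsupport f)ᶜ := (isClosed_tsupport f).isOpen_compl
  have hev : f =ᶠ[𝓝 x] 0 := by
    filter_upwards [hopen.mem_nhds hxn] with y hy
    exact image_eq_zero_of_notMem_tsupport hy
  have : pd i f x = 0 := by
    have h2 := hev.lineDeriv_eq (𝕜 := ℝ) (v := EuclideanSpace.single i (1:ℝ))
    simp only [pd]
    rw [h2]
    simp [lineDeriv]
  exact hx this


lemma pd_comp_smul {f : Ed d → ℝ} (hf : ContDiff ℝ (⊤:ℕ∞) f) (s : ℝ) (i : Fin d) :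
    pd i (fun x => f (s • x)) = fun x => s * pd i f (s • x) := by
  funext x
  have hg : ContDiff ℝ (⊤:ℕ∞) (fun x : Ed d => f (s • x)) :=
    hf.comp (contDiff_const_smul s)
  have h1 : pd i (fun x => f (s • x)) x
      = fderiv ℝ (fun x : Ed d => f (s • x)) x (EuclideanSpace.single i (1:ℝ)) := by
    rw [pd_eq_fderiv hg]
  have hL : DifferentiableAt ℝ (fun x : Ed d => s • x) x :=
    (differentiable_id.const_smul s) x
  have h2 : fderiv ℝ (fun x : Ed d => f (s • x)) x
      = (fderiv ℝ f (s • x)).comp (fderiv ℝ (fun x : Ed d => s • x) x) :=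
    fderiv_comp x (hf.diff' (s • x)) hL
  have h3 : fderiv ℝ (fun x : Ed d => s • x) x = s • ContinuousLinearMap.id ℝ (Ed d) := by
    have h := ContinuousLinearMap.fderiv (𝕜 := ℝ) (s • ContinuousLinearMap.id ℝ (Ed d)) (x := x)
    exact h
  rw [h1, h2, h3, pd_eq_fderiv hf]
  simp only [ContinuousLinearMap.coe_comp', Function.comp_apply,
    ContinuousLinearMap.smul_apply, ContinuousLinearMap.id_apply,
    ContinuousLinearMap.map_smul, smul_eq_mul]

section iter

variable (i : Fin d) (n : ℕ)

lemma iter_pd_contDiff {f : Ed d → ℝ} (hf : ContDiff ℝ (⊤:ℕ∞) f) :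
    ContDiff ℝ (⊤:ℕ∞) ((pd i)^[n] f) := by
  induction n generalizing f with
  | zero => simpa using hf
  | succ m ih => rw [Function.iterate_succ_apply]; exact ih (contDiff_pd hf i)

lemma iter_pd_add {f g : Ed d → ℝ} (hf : ContDiff ℝ (⊤:ℕ∞) f) (hg : ContDiff ℝ (⊤:ℕ∞) g) :
    (pd i)^[n] (f + g) = (pd i)^[n] f + (pd i)^[n] g := by
  induction n generalizing f g with
  | zero => simp
  | succ m ih =>
    simp only [Function.iterate_succ_apply]
    rw [pd_add hf hg, ih (contDiff_pd hf i) (contDiff_pd hg i)]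

lemma iter_pd_smul {f : Ed d → ℝ} (hf : ContDiff ℝ (⊤:ℕ∞) f) (a : ℝ) :
    (pd i)^[n] (a • f) = a • (pd i)^[n] f := by
  induction n generalizing f with
  | zero => simp
  | succ m ih =>
    simp only [Function.iterate_succ_apply]
    rw [pd_smul hf a, ih (contDiff_pd hf i)]

lemma iter_pd_support (f : Ed d → ℝ) :
    tsupport ((pd i)^[n] f) ⊆ tsupport f := by
  induction n generalizing f with
  | zero => simp
  | succ m ih =>
    rw [Function.iterate_succ_apply]
    exact (ih (pd i f)).trans (tsupport_pd_subset f i)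

lemma iter_pd_comp_smul {f : Ed d → ℝ} (hf : ContDiff ℝ (⊤:ℕ∞) f) (s : ℝ) :
    (pd i)^[n] (fun x => f (s • x)) = fun x => s ^ n * (pd i)^[n] f (s • x) := by
  induction n generalizing f with
  | zero => simp
  | succ m ih =>
    simp only [Function.iterate_succ_apply]
    rw [pd_comp_smul hf s]
    have : (fun x => s * pd i f (s • x)) = s • (fun x => (pd i f) (s • x)) := rfl
    rw [this, iter_pd_smul i m (by exact (contDiff_pd hf i).comp (contDiff_const_smul s)),
      ih (contDiff_pd hf i)]
    funext x
    simp [Pi.smul_apply, smul_eq_mul, pow_succ]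
    ring

end iter


section mderivlemmas

variable (k : MIdx d)

lemma mderiv_contDiff {f : Ed d → ℝ} (hf : ContDiff ℝ (⊤:ℕ∞) f) :
    ContDiff ℝ (⊤:ℕ∞) (mderiv k f) := by
  rw [mderiv]
  generalize List.finRange d = L
  induction L generalizing f with
  | nil => simpa using hf
  | cons i L ih => exact iter_pd_contDiff i (k i) (ih hf)

lemma mderiv_contDiff_foldr {f : Ed d → ℝ} (hf : ContDiff ℝ (⊤:ℕ∞) f) (L : List (Fin d)) :
    ContDiff ℝ (⊤:ℕ∞) (L.foldr (fun i g => (pd i)^[k i] g) f) := by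
  induction L generalizing f with
  | nil => simpa using hf
  | cons i L ih => exact iter_pd_contDiff i (k i) (ih hf)

lemma mderiv_add {f g : Ed d → ℝ} (hf : ContDiff ℝ (⊤:ℕ∞) f) (hg : ContDiff ℝ (⊤:ℕ∞) g) :
    mderiv k (f + g) = mderiv k f + mderiv k g := by
  simp only [mderiv]
  generalize List.finRange d = L
  induction L generalizing f g with
  | nil => simp
  | cons i L ih =>
    simp only [List.foldr_cons]
    rw [ih hf hg]
    exact iter_pd_add i (k i) (mderiv_contDiff_foldr k hf L) (mderiv_contDiff_foldr k hg L)

lemma mderiv_smul {f : Ed d → ℝ} (hf : ContDiff ℝ (⊤:ℕ∞) f) (a : ℝ) :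
    mderiv k (a • f) = a • mderiv k f := by
  simp only [mderiv]
  generalize List.finRange d = L
  induction L generalizing f with
  | nil => simp
  | cons i L ih =>
    simp only [List.foldr_cons]
    rw [ih hf]
    exact iter_pd_smul i (k i) (mderiv_contDiff_foldr k hf L) a

lemma mderiv_zero : mderiv k (0 : Ed d → ℝ) = 0 := by
  have h := mderiv_smul (d := d) k contDiff_const (f := fun _ => (0:ℝ)) 0
  have h0 : ((0:ℝ) • (fun _ : Ed d => (0:ℝ))) = (0 : Ed d → ℝ) := by funext x; simp
  rw [h0] at h
  rw [show (0 : Ed d → ℝ) = (fun _ : Ed d => (0:ℝ)) from rfl] at h ⊢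
  rw [h]
  funext x; simp

lemma tsupport_mderiv_subset (f : Ed d → ℝ) :
    tsupport (mderiv k f) ⊆ tsupport f := by
  simp only [mderiv]
  generalize List.finRange d = L
  induction L generalizing f with
  | nil => simp
  | cons i L ih =>
    simp only [List.foldr_cons]
    exact (iter_pd_support i (k i) _).trans (ih f)

lemma mderiv_comp_smul {f : Ed d → ℝ} (hf : ContDiff ℝ (⊤:ℕ∞) f) (s : ℝ) :
    mderiv k (fun x => f (s • x)) = fun x => s ^ (mdeg k) * mderiv k f (s • x) := by
  have key : ∀ L : List (Fin d), ∀ f : Ed d → ℝ, ContDiff ℝ (⊤:ℕ∞) f →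
      L.foldr (fun i g => (pd i)^[k i] g) (fun x => f (s • x))
        = fun x => s ^ ((L.map k).sum) * (L.foldr (fun i g => (pd i)^[k i] g) f) (s • x) := by
    intro L
    induction L with
    | nil => intro f hf; funext x; simp
    | cons i L ih =>
      intro f hf
      simp only [List.foldr_cons, List.map_cons, List.sum_cons]
      rw [ih f hf]
      have hfold := mderiv_contDiff_foldr k hf L
      rw [show (fun x => s ^ (L.map k).sum * (L.foldr (fun i g => (pd i)^[k i] g) f) (s • x))
          = (s ^ (L.map k).sum) •
            (fun x => (L.foldr (fun i g => (pd i)^[k i] g) f) (s • x)) from rfl,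
        iter_pd_smul i (k i) (by exact hfold.comp (contDiff_const_smul s)),
        iter_pd_comp_smul i (k i) hfold s]
      funext x
      simp only [Pi.smul_apply, smul_eq_mul, pow_add]
      ring
  simp only [mderiv]
  rw [key (List.finRange d) f hf]
  have : ((List.finRange d).map k).sum = mdeg k := by
    rw [mdeg, Fin.sum_univ_def]
  rw [this]

end mderivlemmas


section oneD

lemma real_closedBall_Icc (ε : ℝ) : closedBall (0:ℝ) ε = Set.Icc (-ε) ε := by
  rw [Real.closedBall_eq_Icc, zero_sub, zero_add]

/-- 1D dual basis: smooth functions supported in `[-ε,ε]` with `∫ ν_j t^i = δ_{ij}`. -/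
lemma exists_nu (N : ℕ) (ε : ℝ) (hε : 0 < ε) :
    ∃ ν : ℕ → ℝ → ℝ, ∀ j, j ≤ N →
      ContDiff ℝ (⊤:ℕ∞) (ν j) ∧ tsupport (ν j) ⊆ Set.Icc (-ε) ε ∧
      HasCompactSupport (ν j) ∧
      ∀ i, i ≤ N → (∫ t : ℝ, ν j t * t ^ i) = if i = j then 1 else 0 := by
  classical
  let b : ContDiffBump (0:ℝ) := ⟨ε/2, ε, by positivity, by linarith⟩
  have hbc : Continuous b := b.continuous
  have hbs : HasCompactSupport (b : ℝ → ℝ) := b.hasCompactSupport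
  have hint : ∀ n : ℕ, Integrable (fun t : ℝ => b t * t ^ n) := by
    intro n
    exact (hbc.mul (continuous_pow n)).integrable_of_hasCompactSupport
      (hbs.mul_right)
  -- Gram matrix
  set G : Matrix (Fin (N+1)) (Fin (N+1)) ℝ :=
    fun i j => ∫ t : ℝ, b t * t ^ ((i:ℕ)+(j:ℕ)) with hG
  have hinj : Function.Injective G.mulVecLin := by
    rw [← LinearMap.ker_eq_bot, LinearMap.ker_eq_bot']
    intro a ha
    have ha' : G.mulVec a = 0 := ha
    set p : Polynomial ℝ := ∑ j : Fin (N+1), Polynomial.C (a j) * Polynomial.X ^ (j:ℕ) with hp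
    have hpe : ∀ t : ℝ, p.eval t = ∑ j : Fin (N+1), a j * t ^ (j:ℕ) := by
      intro t; simp [hp, Polynomial.eval_finset_sum]
    have hq0 : (∫ t : ℝ, b t * (p.eval t)^2) = 0 := by
      have expand : ∀ t : ℝ, b t * (p.eval t)^2
          = ∑ i : Fin (N+1), ∑ j : Fin (N+1), a i * a j * (b t * t ^ ((i:ℕ)+(j:ℕ))) := by
        intro t
        rw [hpe, sq, Finset.sum_mul_sum]
        rw [Finset.mul_sum]
        refine Finset.sum_congr rfl fun i _ => ?_
        rw [Finset.mul_sum]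
        refine Finset.sum_congr rfl fun j _ => ?_
        rw [pow_add]; ring
      simp_rw [expand]
      rw [integral_finset_sum (μ := volume) Finset.univ
        (f := fun (i : Fin (N+1)) (t : ℝ) =>
          ∑ j : Fin (N+1), a i * a j * (b t * t ^ ((i:ℕ)+(j:ℕ))))
        (fun i _ => by
          apply integrable_finset_sum
          intro j _
          exact ((hint ((i:ℕ)+(j:ℕ))).const_mul _))]
      have : ∀ i : Fin (N+1), (∫ t : ℝ, ∑ j : Fin (N+1), a i * a j * (b t * t ^ ((i:ℕ)+(j:ℕ))))
          = a i * (G.mulVec a i) := by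
        intro i
        rw [integral_finset_sum (μ := volume) Finset.univ
          (f := fun (j : Fin (N+1)) (t : ℝ) => a i * a j * (b t * t ^ ((i:ℕ)+(j:ℕ))))
          (fun j _ => ((hint ((i:ℕ)+(j:ℕ))).const_mul _))]
        simp_rw [integral_const_mul]
        rw [Matrix.mulVec, dotProduct, Finset.mul_sum]
        refine Finset.sum_congr rfl fun j _ => ?_
        simp only [hG]
        ring
      simp_rw [this, ha']
      simp
    have hqz : ∀ t : ℝ, b t * (p.eval t)^2 = 0 := by
      have hnn : ∀ t : ℝ, 0 ≤ b t * (p.eval t)^2 := fun t =>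
        mul_nonneg b.nonneg (sq_nonneg _)
      have hqi : Integrable (fun t : ℝ => b t * (p.eval t)^2) :=
        (hbc.mul ((p.continuous_aeval).pow 2)).integrable_of_hasCompactSupport hbs.mul_right
      have := (integral_eq_zero_iff_of_nonneg hnn hqi).mp hq0
      have hcont : Continuous (fun t : ℝ => b t * (p.eval t)^2) :=
        hbc.mul ((p.continuous_aeval).pow 2)
      have heq := (hcont.ae_eq_iff_eq (μ := volume) continuous_const).mp this
      intro t; exact congrFun heq t
    have hroots : p = 0 := by
      apply Polynomial.eq_zero_of_infinite_isRoot
      apply Set.Infinite.mono (s := Set.Icc (-(ε/2)) (ε/2))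
      · intro t ht
        have hb1 : b t = 1 := b.one_of_mem_closedBall (by
          rw [real_closedBall_Icc]; exact ht)
        have := hqz t
        rw [hb1, one_mul, sq_eq_zero_iff] at this
        exact this
      · exact Set.Icc_infinite (show -(ε/2) < ε/2 by linarith)
    funext j
    have : p.coeff (j:ℕ) = a j := by
      rw [hp]
      rw [Polynomial.finset_sum_coeff]
      simp only [Polynomial.coeff_C_mul, Polynomial.coeff_X_pow]
      rw [Finset.sum_eq_single j]
      · simp
      · intro m _ hm
        have : (m:ℕ) ≠ (j:ℕ) := fun h => hm (Fin.val_injective h)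
        simp [if_neg (Ne.symm this)]
      · simp
    rw [hroots] at this
    simp only [Polynomial.coeff_zero] at this
    exact (this.symm : a j = 0)
  have hsurj : Function.Surjective G.mulVecLin :=
    (LinearMap.injective_iff_surjective).mp hinj
  -- coefficients
  choose coef hcoef using fun j : Fin (N+1) => hsurj (Pi.single j 1)
  set ν : ℕ → ℝ → ℝ := fun j t =>
    if h : j ≤ N then b t * ∑ m : Fin (N+1), coef ⟨j, by omega⟩ m * t ^ (m:ℕ) else 0 with hν
  refine ⟨ν, fun j hj => ?_⟩
  have hνj : ν j = fun t => b t * ∑ m : Fin (N+1), coef ⟨j, by omega⟩ m * t ^ (m:ℕ) := by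
    funext t; simp [hν, dif_pos hj]
  constructor
  · rw [hνj]
    have : ContDiff ℝ (⊤:ℕ∞) (fun t : ℝ => ∑ m : Fin (N+1), coef ⟨j, by omega⟩ m * t ^ (m:ℕ)) :=
      ContDiff.sum fun m _ => contDiff_const.mul (contDiff_id.pow _)
    exact b.contDiff.mul this
  refine ⟨?_, ?_, ?_⟩
  · rw [hνj]
    have hsub : Function.support (fun t : ℝ => b t * ∑ m : Fin (N+1),
        coef ⟨j, by omega⟩ m * t ^ (m:ℕ)) ⊆ Set.Icc (-ε) ε := by
      intro t ht
      have hbt : b t ≠ 0 := fun h => ht (by simp [h])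
      have : t ∈ Function.support b := hbt
      rw [b.support_eq] at this
      have : t ∈ closedBall (0:ℝ) ε := ball_subset_closedBall this
      rwa [real_closedBall_Icc] at this
    exact closure_minimal hsub isClosed_Icc
  · rw [hνj]
    exact hbs.mul_right
  · intro i hi
    rw [hνj]
    have hexp : (fun t : ℝ => (b t * ∑ m : Fin (N+1), coef ⟨j, by omega⟩ m * t ^ (m:ℕ)) * t ^ i)
        = fun t : ℝ => ∑ m : Fin (N+1), coef ⟨j, by omega⟩ m * (b t * t ^ (i+(m:ℕ))) := by
      funext t
      rw [Finset.mul_sum, Finset.sum_mul]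
      refine Finset.sum_congr rfl fun m _ => ?_
      rw [pow_add]; ring
    rw [hexp, integral_finset_sum (μ := volume) Finset.univ
      (f := fun (m : Fin (N+1)) (t : ℝ) => coef ⟨j, by omega⟩ m * (b t * t ^ (i+(m:ℕ))))
      (fun m _ => ((hint (i+(m:ℕ))).const_mul _))]
    simp_rw [integral_const_mul]
    have hmv := congrFun (hcoef ⟨j, by omega⟩) ⟨i, by omega⟩
    have hlhs : G.mulVecLin (coef ⟨j, by omega⟩) ⟨i, by omega⟩
        = ∑ m : Fin (N+1), coef ⟨j, by omega⟩ m * ∫ t : ℝ, b t * t ^ (i+(m:ℕ)) := by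
      rw [Matrix.mulVecLin_apply, Matrix.mulVec, dotProduct]
      refine Finset.sum_congr rfl fun m _ => ?_
      rw [hG]
      simp only []
      rw [mul_comm]
    rw [← hlhs, hmv, Pi.single_apply]
    simp [Fin.mk.injEq]

end oneD


section muSec

lemma coord_contDiff (i : Fin d) : ContDiff ℝ (⊤:ℕ∞) (fun z : Ed d => z i) :=
  (contDiff_euclidean.mp contDiff_id) i

lemma exists_mu (d N : ℕ) :
    ∃ μ : MIdx d → Ed d → ℝ, ∀ k : MIdx d, mdeg k ≤ N →
      ContDiff ℝ (⊤:ℕ∞) (μ k) ∧ HasCompactSupport (μ k) ∧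
      tsupport (μ k) ⊆ closedBall (0 : Ed d) (1/2) ∧
      ∀ l : MIdx d, mdeg l ≤ N → (∫ z, μ k z * mpow z l) = if k = l then 1 else 0 := by
  classical
  set ε : ℝ := (2*((d:ℝ)+1))⁻¹ with hεdef
  have hε : 0 < ε := by positivity
  obtain ⟨ν, hν⟩ := exists_nu N ε hε
  refine ⟨fun k z => ∏ i, ν (k i) (z i), fun k hk => ?_⟩
  have hki : ∀ i : Fin d, k i ≤ N := fun i =>
    le_trans (Finset.single_le_sum (f := fun i => k i) (fun _ _ => Nat.zero_le _)
      (Finset.mem_univ i)) hk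
  have hsupp : Function.support (fun z : Ed d => ∏ i, ν (k i) (z i))
      ⊆ {z : Ed d | ∀ i, |z i| ≤ ε} := by
    intro z hz
    simp only [Function.mem_support] at hz
    intro i
    have hfac : ν (k i) (z i) ≠ 0 := by
      intro h0
      exact hz (Finset.prod_eq_zero (Finset.mem_univ i) h0)
    have : z i ∈ tsupport (ν (k i)) := subset_closure hfac
    have := (hν (k i) (hki i)).2.1 this
    rw [Set.mem_Icc] at this
    exact abs_le.mpr this
  have hCclosed : IsClosed {z : Ed d | ∀ i, |z i| ≤ ε} := by
    have : {z : Ed d | ∀ i, |z i| ≤ ε} = ⋂ i, {z : Ed d | |z i| ≤ ε} := by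
      ext z; simp
    rw [this]
    exact isClosed_iInter fun i =>
      IsClosed.preimage (continuous_abs.comp (coord_contDiff i).continuous)
        isClosed_Iic
  have hCsub : {z : Ed d | ∀ i, |z i| ≤ ε} ⊆ closedBall (0 : Ed d) (1/2) := by
    intro z hz
    rw [mem_closedBall, dist_zero_right]
    rw [EuclideanSpace.norm_eq]
    have h1 : ∑ i, ‖z i‖^2 ≤ (d:ℝ) * ε^2 := by
      calc ∑ i, ‖z i‖^2 ≤ ∑ _i : Fin d, ε^2 := by
            refine Finset.sum_le_sum fun i _ => ?_
            have := hz i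
            rw [Real.norm_eq_abs]
            nlinarith [abs_nonneg (z i)]
        _ = (d:ℝ) * ε^2 := by simp [mul_comm]
    have h2 : (d:ℝ) * ε^2 ≤ (1/2)^2 := by
      rw [hεdef]
      rw [div_pow, one_pow]
      rw [show ((2*((d:ℝ)+1))⁻¹)^2 = ((2*((d:ℝ)+1))^2)⁻¹ by rw [inv_pow]]
      rw [mul_inv_le_iff₀ (by positivity)]
      rw [div_mul_eq_mul_div, le_div_iff₀ (by norm_num)]
      nlinarith [Nat.cast_nonneg (α := ℝ) d]
    calc Real.sqrt (∑ i, ‖z i‖^2) ≤ Real.sqrt ((1/2)^2) :=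
          Real.sqrt_le_sqrt (h1.trans h2)
      _ = 1/2 := Real.sqrt_sq (by norm_num)
  have htsupp : tsupport (fun z : Ed d => ∏ i, ν (k i) (z i))
      ⊆ closedBall (0 : Ed d) (1/2) :=
    (closure_minimal hsupp hCclosed).trans hCsub
  refine ⟨?_, ?_, htsupp, ?_⟩
  · exact contDiff_prod fun i _ => ((hν (k i) (hki i)).1).comp (coord_contDiff i)
  · exact HasCompactSupport.of_support_subset_isCompact (isCompact_closedBall _ _)
      (hsupp.trans hCsub)
  · intro l hl
    have hli : ∀ i : Fin d, l i ≤ N := fun i =>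
      le_trans (Finset.single_le_sum (f := fun i => l i) (fun _ _ => Nat.zero_le _)
        (Finset.mem_univ i)) hl
    have step1 : (∫ z : Ed d, (∏ i, ν (k i) (z i)) * mpow z l)
        = ∫ z : Ed d, ∏ i, (ν (k i) (z i) * (z i) ^ (l i)) := by
      congr 1
      funext z
      rw [mpow, ← Finset.prod_mul_distrib]
    rw [step1]
    have mp := (EuclideanSpace.volume_preserving_symm_measurableEquiv_toLp (Fin d)).symm
    have step2 : (∫ z : Ed d, ∏ i, (ν (k i) (z i) * (z i) ^ (l i)))
        = ∫ x : Fin d → ℝ, ∏ i, (ν (k i) (x i) * (x i) ^ (l i)) := by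
      rw [← mp.integral_comp']
      rfl
    rw [step2, MeasureTheory.integral_fintype_prod_volume_eq_prod
      (f := fun i (t:ℝ) => ν (k i) t * t ^ (l i))]
    have hfac : ∀ i : Fin d, (∫ t : ℝ, ν (k i) t * t ^ (l i))
        = if l i = k i then 1 else 0 := fun i =>
      ((hν (k i) (hki i)).2.2.2) (l i) (hli i)
    by_cases hkl : k = l
    · subst hkl
      simp [hfac]
    · rw [if_neg hkl]
      obtain ⟨i, hi⟩ := Function.ne_iff.mp hkl
      refine Finset.prod_eq_zero (Finset.mem_univ i) ?_
      rw [hfac i, if_neg (fun h => hi h.symm)]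

end muSec


section misc

lemma mderiv_zero_idx (f : Ed d → ℝ) : mderiv (fun _ => 0) f = f := by
  rw [mderiv]
  generalize List.finRange d = L
  induction L with
  | nil => rfl
  | cons i L ih => simpa using ih

lemma mderiv_const_mul {f : Ed d → ℝ} (hf : ContDiff ℝ (⊤:ℕ∞) f) (a : ℝ) (k : MIdx d) :
    mderiv k (fun z => a * f z) = fun z => a * mderiv k f z := by
  have h := mderiv_smul k hf a
  have h1 : (a • f) = fun z => a * f z := rfl
  rw [h1] at h
  rw [h]
  rfl

lemma mderiv_finset_sum {ι : Type*} (s : Finset ι) (F : ι → Ed d → ℝ)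
    (hF : ∀ i ∈ s, ContDiff ℝ (⊤:ℕ∞) (F i)) (j : MIdx d) :
    mderiv j (fun z => ∑ i ∈ s, F i z) = fun z => ∑ i ∈ s, mderiv j (F i) z := by
  classical
  induction s using Finset.induction with
  | empty =>
    have : (fun z : Ed d => ∑ i ∈ (∅ : Finset ι), F i z) = 0 := by funext z; simp
    rw [this, mderiv_zero]
    funext z; simp
  | insert a s hni ih =>
    have hsum : ContDiff ℝ (⊤:ℕ∞) (fun z => ∑ i ∈ s, F i z) :=
      ContDiff.sum fun i hi => hF i (Finset.mem_insert_of_mem hi)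
    have h1 : (fun z : Ed d => ∑ i ∈ insert a s, F i z)
        = F a + fun z => ∑ i ∈ s, F i z := by
      funext z; simp [Finset.sum_insert hni]
    rw [h1, mderiv_add j (hF a (Finset.mem_insert_self a s)) hsum,
      ih (fun i hi => hF i (Finset.mem_insert_of_mem hi))]
    funext z; simp [Finset.sum_insert hni]

lemma mpow_continuous (k : MIdx d) : Continuous (fun z : Ed d => mpow z k) := by
  simp only [mpow]
  exact continuous_finset_prod _ fun i _ => ((coord_contDiff i).continuous).pow _

lemma mpow_smul (s : ℝ) (v : Ed d) (k : MIdx d) :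
    mpow (s • v) k = s ^ (mdeg k) * mpow v k := by
  simp only [mpow, mdeg]
  have : ∀ i : Fin d, ((s • v) i) ^ (k i) = s ^ (k i) * (v i) ^ (k i) := by
    intro i
    rw [PiLp.smul_apply, smul_eq_mul, mul_pow]
  simp_rw [this]
  rw [Finset.prod_mul_distrib, Finset.prod_pow_eq_pow_sum]

lemma abs_mpow_le_one {z : Ed d} (hz : ‖z‖ ≤ 1) (k : MIdx d) : |mpow z k| ≤ 1 := by
  rw [mpow, Finset.abs_prod]
  refine Finset.prod_le_one (fun i _ => abs_nonneg _) fun i _ => ?_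
  rw [abs_pow]
  refine pow_le_one₀ (abs_nonneg _) ?_
  calc |z i| ≤ ‖z‖ := by
        rw [EuclideanSpace.norm_eq,
          show |z i| = Real.sqrt (‖z i‖^2) by rw [Real.sqrt_sq_eq_abs, Real.norm_eq_abs, abs_abs]]
        exact Real.sqrt_le_sqrt (Finset.single_le_sum (f := fun j => ‖z j‖^2)
          (fun j _ => sq_nonneg _) (Finset.mem_univ i))
    _ ≤ 1 := hz

lemma intCC {F : Ed d → ℝ} (hF : Continuous F) (hFc : HasCompactSupport F) (l : MIdx d) :
    Integrable (fun z => F z * mpow z l) :=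
  (hF.mul (mpow_continuous l)).integrable_of_hasCompactSupport hFc.mul_right

lemma moment_bound {ψ : Ed d → ℝ} (hsupp : tsupport ψ ⊆ closedBall (0:Ed d) 1)
    (hb : ∀ z, |ψ z| ≤ 1) (hc : Continuous ψ) (hcs : HasCompactSupport ψ) (k : MIdx d) :
    |∫ z, ψ z * mpow z k| ≤ (volume (closedBall (0:Ed d) 1)).toReal := by
  have hind : Integrable ((closedBall (0:Ed d) 1).indicator (fun _ => (1:ℝ))) := by
    rw [integrable_indicator_iff measurableSet_closedBall]
    exact integrableOn_const measure_closedBall_lt_top.ne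
  have hpt : ∀ z, |ψ z * mpow z k| ≤ (closedBall (0:Ed d) 1).indicator (fun _ => (1:ℝ)) z := by
    intro z
    by_cases hz : z ∈ tsupport ψ
    · have hz1 : z ∈ closedBall (0:Ed d) 1 := hsupp hz
      rw [Set.indicator_of_mem hz1, abs_mul]
      have h2 : ‖z‖ ≤ 1 := by rwa [mem_closedBall, dist_zero_right] at hz1
      calc |ψ z| * |mpow z k| ≤ 1 * 1 :=
            mul_le_mul (hb z) (abs_mpow_le_one h2 k) (abs_nonneg _) zero_le_one
        _ = 1 := by ring
    · rw [image_eq_zero_of_notMem_tsupport hz, zero_mul, abs_zero]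
      exact Set.indicator_nonneg (fun _ _ => zero_le_one) z
  calc |∫ z, ψ z * mpow z k| ≤ ∫ z, |ψ z * mpow z k| := (by
        simpa only [Real.norm_eq_abs] using
          norm_integral_le_integral_norm (μ := volume) (f := fun z => ψ z * mpow z k))
    _ ≤ ∫ z, (closedBall (0:Ed d) 1).indicator (fun _ => (1:ℝ)) z := by
        refine integral_mono ((intCC hc hcs k).abs) hind hpt
    _ = (volume (closedBall (0:Ed d) 1)).toReal := by
        rw [integral_indicator_const _ measurableSet_closedBall]; simp; rfl

end misc

lemma contDiff_const_smul_fun {f : Ed d → ℝ} (hf : ContDiff ℝ (⊤:ℕ∞) f) (a : ℝ) :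
    ContDiff ℝ (⊤:ℕ∞) (a • f) := by exact hf.const_smul a

lemma mderiv_sub {f g : Ed d → ℝ} (hf : ContDiff ℝ (⊤:ℕ∞) f) (hg : ContDiff ℝ (⊤:ℕ∞) g)
    (k : MIdx d) :
    mderiv k (fun z => f z - g z) = fun z => mderiv k f z - mderiv k g z := by
  have h1 : (fun z => f z - g z) = f + ((-1:ℝ) • g) := by
    funext z; simp [Pi.add_apply]; ring
  rw [h1, mderiv_add k hf (contDiff_const_smul_fun hg (-1)), mderiv_smul k hg]
  funext z; simp [Pi.add_apply]; ring


section scTFlem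

lemma scTF_pow_zero (f : Ed d → ℝ) (y : Ed d) : scTF f 0 ((2:ℝ)^(0:ℕ)) y = f y := by
  simp [scTF]

lemma scTF_sub (f g : Ed d → ℝ) (l : ℝ) (y : Ed d) :
    scTF (fun z => f z - g z) 0 l y = scTF f 0 l y - scTF g 0 l y := by
  simp [scTF, mul_sub]

lemma scTF_shift (g : Ed d → ℝ) (n : ℕ) (y : Ed d) :
    scTF (fun z => ((2:ℝ)^d)⁻¹ * g ((2:ℝ)⁻¹ • z)) 0 ((2:ℝ)^n) y
      = scTF g 0 ((2:ℝ)^(n+1)) y := by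
  simp only [scTF, sub_zero]
  have h1 : (2:ℝ)⁻¹ • (((2:ℝ)^n)⁻¹ • y) = ((2:ℝ)^(n+1))⁻¹ • y := by
    rw [smul_smul, ← mul_inv, ← pow_succ']
  rw [h1, ← mul_assoc, ← mul_inv, ← mul_pow, ← pow_succ]

lemma integral_scale_half {F : Ed d → ℝ} (l : MIdx d) :
    (∫ z : Ed d, (((2:ℝ)^d)⁻¹ * F ((2:ℝ)⁻¹ • z)) * mpow z l)
      = (2:ℝ)^(mdeg l) * ∫ w, F w * mpow w l := by
  have h1 : ∀ z : Ed d, (((2:ℝ)^d)⁻¹ * F ((2:ℝ)⁻¹ • z)) * mpow z l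
      = (fun w => ((2:ℝ)^d)⁻¹ * (F w * mpow ((2:ℝ) • w) l)) ((2:ℝ)⁻¹ • z) := by
    intro z
    have h2 : (2:ℝ) • ((2:ℝ)⁻¹ • z) = z := by
      rw [smul_smul]; norm_num
    simp only [h2]; ring
  simp_rw [h1]
  rw [MeasureTheory.Measure.integral_comp_smul volume
    (fun w => ((2:ℝ)^d)⁻¹ * (F w * mpow ((2:ℝ) • w) l)) ((2:ℝ)⁻¹)]
  have h3 : |(((2:ℝ)⁻¹) ^ (Module.finrank ℝ (Ed d)))⁻¹| = (2:ℝ)^d := by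
    rw [finrank_euclideanSpace_fin, ← inv_pow, inv_inv, abs_of_nonneg (by positivity)]
  rw [h3]
  have h4 : ∀ w : Ed d, ((2:ℝ)^d)⁻¹ * (F w * mpow ((2:ℝ) • w) l)
      = ((2:ℝ)^d)⁻¹ * (2:ℝ)^(mdeg l) * (F w * mpow w l) := by
    intro w; rw [mpow_smul]; ring
  simp_rw [h4]
  rw [MeasureTheory.integral_const_mul, smul_eq_mul]
  have h5 : ((2:ℝ)^d)⁻¹ * (2:ℝ)^d = 1 := by
    rw [inv_mul_cancel₀ (by positivity)]
  calc (2:ℝ)^d * (((2:ℝ)^d)⁻¹ * (2:ℝ)^(mdeg l) * ∫ w, F w * mpow w l)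
      = (((2:ℝ)^d)⁻¹ * (2:ℝ)^d) * ((2:ℝ)^(mdeg l) * ∫ w, F w * mpow w l) := by ring
    _ = (2:ℝ)^(mdeg l) * ∫ w, F w * mpow w l := by rw [h5, one_mul]

end scTFlem

end AuxLSD

/-- Lemma 4.10, large scale decomposition of test functions: for
`r ∈ ℕ₀`, `c ∈ ℕ₀ ∪ {-1}`, there is a constant `cst > 0` (depending only on `r,c,d`)
such that every `ψ ∈ 𝓑^r` can be written, for every `M ∈ ℕ₀`, as
`ψ = (ψ̃^{[M]})^{2^M} + Σ_{n=0}^M (ψ̌^{[n]})^{2^n}` with `ψ̃^{[M]} ∈ cst·𝓑^r` and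
`ψ̌^{[n]} ∈ cst·𝓑^r_c` for `0 ≤ n ≤ M`. -/
theorem large_scale_decomposition
    (d r : ℕ) (c : ℤ) (hc : -1 ≤ c) :
    ∃ cst : ℝ, 0 < cst ∧
      ∀ ψ ∈ TB d r, ∀ M : ℕ,
        ∃ (ψt : Ed d → ℝ) (ψc : ℕ → Ed d → ℝ),
          ψt ∈ cst • TB d r ∧
          (∀ n : ℕ, n ≤ M → ψc n ∈ cst • TBAnn d r (c : ℝ)) ∧
          ∀ y : Ed d,
            ψ y = scTF ψt 0 ((2 : ℝ) ^ M) y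
              + ∑ n ∈ Finset.range (M + 1), scTF (ψc n) 0 ((2 : ℝ) ^ n) y := by
  classical
  set N := c.toNat with hN
  obtain ⟨μ, hμ⟩ := exists_mu d N
  set S : Finset (MIdx d) := (Finset.Iic (fun _ => N)).filter (fun k => (mdeg k : ℤ) ≤ c) with hS
  have hmemS : ∀ k : MIdx d, k ∈ S ↔ (mdeg k : ℤ) ≤ c := by
    intro k
    rw [hS, Finset.mem_filter, Finset.mem_Iic]
    constructor
    · exact fun h => h.2
    · intro h
      refine ⟨fun i => ?_, h⟩
      have h1 : k i ≤ mdeg k := Finset.single_le_sum (f := fun i => k i)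
        (fun _ _ => Nat.zero_le _) (Finset.mem_univ i)
      show k i ≤ N
      simp only [hN]
      omega
  have hSdeg : ∀ k ∈ S, mdeg k ≤ N := by
    intro k hk
    have := (hmemS k).mp hk
    simp only [hN]
    omega
  -- uniform bound on derivatives of the μ's
  have hBex : ∀ k : MIdx d, ∃ Bk : ℝ, 0 ≤ Bk ∧
      (k ∈ S → ∀ j : MIdx d, mdeg j ≤ r → ∀ x, |mderiv j (μ k) x| ≤ Bk) := by
    intro k
    by_cases hk : k ∈ S
    · have hμk := hμ k (hSdeg k hk)
      have hjb : ∀ j : MIdx d, ∃ Bj : ℝ, 0 ≤ Bj ∧ ∀ x, |mderiv j (μ k) x| ≤ Bj := by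
        intro j
        have hcs : HasCompactSupport (mderiv j (μ k)) :=
          IsCompact.of_isClosed_subset hμk.2.1 (isClosed_tsupport _)
            (tsupport_mderiv_subset j (μ k))
        obtain ⟨C, hC⟩ :=
          ((mderiv_contDiff j hμk.1).continuous).bounded_above_of_compact_support hcs
        refine ⟨max C 0, le_max_right _ _, fun x => ?_⟩
        have := hC x
        rw [Real.norm_eq_abs] at this
        exact this.trans (le_max_left _ _)
      choose Bj hBj0 hBj using hjb
      refine ⟨∑ j ∈ Finset.Iic (fun _ => r : MIdx d), Bj j,
        Finset.sum_nonneg (fun j _ => hBj0 j), fun _ j hjr x => ?_⟩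
      have hjmem : j ∈ Finset.Iic (fun _ => r : MIdx d) := by
        rw [Finset.mem_Iic]
        intro i
        have h1 : j i ≤ mdeg j := Finset.single_le_sum (f := fun i => j i)
          (fun _ _ => Nat.zero_le _) (Finset.mem_univ i)
        show j i ≤ r
        omega
      exact (hBj j x).trans (Finset.single_le_sum (fun j _ => hBj0 j) hjmem)
    · exact ⟨0, le_rfl, fun h => absurd h hk⟩
  choose B hB0 hB using hBex
  set V : ℝ := (volume (closedBall (0:Ed d) 1)).toReal with hV
  have hV0 : 0 ≤ V := ENNReal.toReal_nonneg
  set A : ℝ := ∑ k ∈ S, V * B k with hA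
  have hA0 : 0 ≤ A := Finset.sum_nonneg fun k _ => mul_nonneg hV0 (hB0 k)
  refine ⟨1 + 2*A, by linarith, ?_⟩
  rintro ψ ⟨⟨hψs, hψcs⟩, hψsupp, hψder⟩ M
  set cst : ℝ := 1 + 2*A with hcst
  have hcst0 : (0:ℝ) < cst := by rw [hcst]; linarith
  have hψbd : ∀ z, |ψ z| ≤ 1 := by
    intro z
    have := hψder (fun _ => 0) (by simp [mdeg]) z
    rwa [mderiv_zero_idx] at this
  set m : MIdx d → ℝ := fun k => ∫ z, ψ z * mpow z k with hm
  have hmV : ∀ k, |m k| ≤ V := fun k => moment_bound hψsupp hψbd hψs.continuous hψcs k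
  -- building blocks
  set Φ : ℕ → Ed d → ℝ := fun n z => ∑ k ∈ S, ((2:ℝ)^(n * mdeg k))⁻¹ * m k * μ k z with hΦ
  set Ψ : ℕ → Ed d → ℝ := fun n => if n = 0 then ψ else Φ n with hΨ
  have hΨ0 : Ψ 0 = ψ := by rw [hΨ]; simp
  have hΨs1 : ∀ n : ℕ, Ψ (n+1) = Φ (n+1) := fun n => by rw [hΨ]; simp
  have hΦsmooth : ∀ n, ContDiff ℝ (⊤:ℕ∞) (Φ n) := by
    intro n
    rw [hΦ]
    exact ContDiff.sum fun k hk => contDiff_const.mul (hμ k (hSdeg k hk)).1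
  have hΨsmooth : ∀ n, ContDiff ℝ (⊤:ℕ∞) (Ψ n) := by
    intro n
    rcases Nat.eq_zero_or_pos n with h | h
    · rw [h, hΨ0]; exact hψs
    · obtain ⟨m', rfl⟩ := Nat.exists_eq_succ_of_ne_zero (Nat.pos_iff_ne_zero.mp h)
      rw [hΨs1]; exact hΦsmooth _
  have hΦsupp : ∀ n, tsupport (Φ n) ⊆ closedBall (0:Ed d) (1/2) := by
    intro n
    refine closure_minimal ?_ isClosed_closedBall
    intro z hz
    rw [Function.mem_support] at hz
    by_contra hzc
    apply hz
    rw [hΦ]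
    refine Finset.sum_eq_zero fun k hk => ?_
    have h0 : μ k z = 0 := by
      by_contra hμz
      exact hzc ((hμ k (hSdeg k hk)).2.2.1 (subset_closure hμz))
    rw [h0, mul_zero]
  have hΨsupp : ∀ n, tsupport (Ψ n) ⊆ closedBall (0:Ed d) 1 := by
    intro n
    rcases Nat.eq_zero_or_pos n with h | h
    · rw [h, hΨ0]; exact hψsupp
    · obtain ⟨m', rfl⟩ := Nat.exists_eq_succ_of_ne_zero (Nat.pos_iff_ne_zero.mp h)
      rw [hΨs1]
      exact (hΦsupp _).trans (closedBall_subset_closedBall (by norm_num))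
  have hΨcs : ∀ n, HasCompactSupport (Ψ n) := fun n =>
    IsCompact.of_isClosed_subset (isCompact_closedBall _ _) (isClosed_tsupport _) (hΨsupp n)
  -- scaled pieces
  have hscale_smooth : ∀ n, ContDiff ℝ (⊤:ℕ∞)
      (fun z : Ed d => ((2:ℝ)^d)⁻¹ * Ψ n ((2:ℝ)⁻¹ • z)) := fun n =>
    contDiff_const.mul ((hΨsmooth n).comp (contDiff_const_smul _))
  have hscaled_supp : ∀ n : ℕ,
      tsupport (fun z : Ed d => ((2:ℝ)^d)⁻¹ * Ψ (n+1) ((2:ℝ)⁻¹ • z))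
        ⊆ closedBall (0:Ed d) 1 := by
    intro n
    have hclosed : IsClosed {z : Ed d | ((2:ℝ)⁻¹ • z) ∈ closedBall (0:Ed d) (1/2)} :=
      IsClosed.preimage (continuous_const_smul _) isClosed_closedBall
    refine (closure_minimal ?_ hclosed).trans ?_
    · intro z hz
      rw [Function.mem_support] at hz
      have h1 : Ψ (n+1) ((2:ℝ)⁻¹ • z) ≠ 0 := by
        intro h0; exact hz (by rw [h0, mul_zero])
      have h2 : ((2:ℝ)⁻¹ • z) ∈ tsupport (Ψ (n+1)) := subset_closure h1
      rw [hΨs1 n] at h2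
      exact hΦsupp (n+1) h2
    · intro z hz
      simp only [Set.mem_setOf_eq, mem_closedBall, dist_zero_right] at hz ⊢
      rw [norm_smul] at hz
      have : ‖(2:ℝ)⁻¹‖ = 1/2 := by rw [Real.norm_eq_abs]; norm_num
      rw [this] at hz
      linarith
  have hscale_cs : ∀ n : ℕ,
      HasCompactSupport (fun z : Ed d => ((2:ℝ)^d)⁻¹ * Ψ (n+1) ((2:ℝ)⁻¹ • z)) := fun n =>
    IsCompact.of_isClosed_subset (isCompact_closedBall _ _) (isClosed_tsupport _)
      (hscaled_supp n)
  set χ : ℕ → Ed d → ℝ :=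
    fun n z => Ψ n z - ((2:ℝ)^d)⁻¹ * Ψ (n+1) ((2:ℝ)⁻¹ • z) with hχ
  set ψt : Ed d → ℝ := fun z => ((2:ℝ)^d)⁻¹ * Ψ (M+1) ((2:ℝ)⁻¹ • z) with hψt
  have hχsmooth : ∀ n, ContDiff ℝ (⊤:ℕ∞) (χ n) := by
    intro n
    rw [hχ]
    exact (hΨsmooth n).sub (hscale_smooth (n+1))
  have hχsupp : ∀ n, tsupport (χ n) ⊆ closedBall (0:Ed d) 1 := by
    intro n
    refine closure_minimal ?_ isClosed_closedBall
    intro z hz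
    rw [Function.mem_support] at hz
    by_contra hzball
    apply hz
    have h1 : Ψ n z = 0 :=
      image_eq_zero_of_notMem_tsupport (fun hmem => hzball (hΨsupp n hmem))
    have h2 : ((2:ℝ)^d)⁻¹ * Ψ (n+1) ((2:ℝ)⁻¹ • z) = 0 :=
      image_eq_zero_of_notMem_tsupport
        (f := fun z : Ed d => ((2:ℝ)^d)⁻¹ * Ψ (n+1) ((2:ℝ)⁻¹ • z))
        (fun hmem => hzball (hscaled_supp n hmem))
    rw [hχ]
    simp only []
    rw [h1, h2, sub_zero]
  have hχcs : ∀ n, HasCompactSupport (χ n) := fun n =>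
    IsCompact.of_isClosed_subset (isCompact_closedBall _ _) (isClosed_tsupport _) (hχsupp n)
  -- derivative bounds
  have hΦbd : ∀ n, ∀ j : MIdx d, mdeg j ≤ r → ∀ x, |mderiv j (Φ n) x| ≤ A := by
    intro n j hj x
    rw [hΦ, mderiv_finset_sum S _
      (fun k hk => contDiff_const.mul (hμ k (hSdeg k hk)).1) j]
    calc |∑ k ∈ S, mderiv j (fun z => ((2:ℝ)^(n * mdeg k))⁻¹ * m k * μ k z) x|
        ≤ ∑ k ∈ S, |mderiv j (fun z => ((2:ℝ)^(n * mdeg k))⁻¹ * m k * μ k z) x| :=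
          Finset.abs_sum_le_sum_abs _ _
      _ ≤ ∑ k ∈ S, V * B k := by
          refine Finset.sum_le_sum fun k hk => ?_
          rw [mderiv_const_mul (hμ k (hSdeg k hk)).1 _ j]
          rw [abs_mul]
          have hco : |((2:ℝ)^(n * mdeg k))⁻¹ * m k| ≤ V := by
            rw [abs_mul]
            have h1 : |((2:ℝ)^(n * mdeg k))⁻¹| ≤ 1 := by
              rw [abs_of_nonneg (by positivity)]
              rw [inv_le_one_iff₀]
              right
              exact one_le_pow₀ (by norm_num)
            calc |((2:ℝ)^(n * mdeg k))⁻¹| * |m k| ≤ 1 * V :=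
                  mul_le_mul h1 (hmV k) (abs_nonneg _) zero_le_one
              _ = V := one_mul V
          exact mul_le_mul hco (hB k hk j hj x) (abs_nonneg _) hV0
      _ = A := by rw [hA]
  have hΨbd : ∀ n, ∀ j : MIdx d, mdeg j ≤ r → ∀ x, |mderiv j (Ψ n) x| ≤ 1 + A := by
    intro n j hj x
    rcases Nat.eq_zero_or_pos n with h | h
    · rw [h, hΨ0]
      exact (hψder j hj x).trans (by linarith)
    · obtain ⟨m', rfl⟩ := Nat.exists_eq_succ_of_ne_zero (Nat.pos_iff_ne_zero.mp h)
      rw [hΨs1]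
      exact (hΦbd _ j hj x).trans (by linarith)
  have hscaledbd : ∀ n : ℕ, ∀ j : MIdx d, mdeg j ≤ r → ∀ x,
      |mderiv j (fun z : Ed d => ((2:ℝ)^d)⁻¹ * Ψ (n+1) ((2:ℝ)⁻¹ • z)) x| ≤ A := by
    intro n j hj x
    have hcomp : mderiv j (fun z : Ed d => Ψ (n+1) ((2:ℝ)⁻¹ • z))
        = fun z => ((2:ℝ)⁻¹) ^ (mdeg j) * mderiv j (Ψ (n+1)) ((2:ℝ)⁻¹ • z) :=
      mderiv_comp_smul j (hΨsmooth (n+1)) ((2:ℝ)⁻¹)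
    have h2 : mderiv j (fun z : Ed d => ((2:ℝ)^d)⁻¹ * Ψ (n+1) ((2:ℝ)⁻¹ • z))
        = fun z => ((2:ℝ)^d)⁻¹ * (mderiv j (fun z : Ed d => Ψ (n+1) ((2:ℝ)⁻¹ • z)) z) :=
      mderiv_const_mul ((hΨsmooth (n+1)).comp (contDiff_const_smul _)) _ j
    rw [h2, hcomp]
    simp only []
    rw [abs_mul, abs_mul]
    have hb1 : |((2:ℝ)^d)⁻¹| ≤ 1 := by
      rw [abs_of_nonneg (by positivity), inv_le_one_iff₀]
      right; exact one_le_pow₀ (by norm_num)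
    have hb2 : |((2:ℝ)⁻¹) ^ (mdeg j)| ≤ 1 := by
      rw [abs_of_nonneg (by positivity)]
      exact pow_le_one₀ (by norm_num) (by norm_num)
    have hb3 : |mderiv j (Ψ (n+1)) ((2:ℝ)⁻¹ • x)| ≤ A := by
      rw [hΨs1 n]
      exact hΦbd (n+1) j hj _
    calc |((2:ℝ)^d)⁻¹| * (|((2:ℝ)⁻¹) ^ (mdeg j)| * |mderiv j (Ψ (n+1)) ((2:ℝ)⁻¹ • x)|)
        ≤ 1 * (1 * A) := by
          refine mul_le_mul hb1 ?_ (by positivity) zero_le_one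
          exact mul_le_mul hb2 hb3 (abs_nonneg _) zero_le_one
      _ = A := by ring
  have hχbd : ∀ n, ∀ j : MIdx d, mdeg j ≤ r → ∀ x, |mderiv j (χ n) x| ≤ cst := by
    intro n j hj x
    rw [hχ, mderiv_sub (hΨsmooth n) (hscale_smooth (n+1)) j]
    simp only []
    calc |mderiv j (Ψ n) x
          - mderiv j (fun z : Ed d => ((2:ℝ)^d)⁻¹ * Ψ (n+1) ((2:ℝ)⁻¹ • z)) x|
        ≤ |mderiv j (Ψ n) x|
          + |mderiv j (fun z : Ed d => ((2:ℝ)^d)⁻¹ * Ψ (n+1) ((2:ℝ)⁻¹ • z)) x| :=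
          abs_sub _ _
      _ ≤ (1 + A) + A := add_le_add (hΨbd n j hj x) (hscaledbd n j hj x)
      _ = cst := by rw [hcst]; ring
  -- moments
  have hmΦ : ∀ n, ∀ l ∈ S, (∫ z, Φ n z * mpow z l) = ((2:ℝ)^(n * mdeg l))⁻¹ * m l := by
    intro n l hl
    have h1 : ∀ z : Ed d, Φ n z * mpow z l
        = ∑ k ∈ S, ((2:ℝ)^(n * mdeg k))⁻¹ * m k * (μ k z * mpow z l) := by
      intro z
      rw [hΦ]
      simp only []
      rw [Finset.sum_mul]
      exact Finset.sum_congr rfl fun k _ => by ring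
    simp_rw [h1]
    rw [integral_finset_sum S (fun k hk => (((intCC (hμ k (hSdeg k hk)).1.continuous
      (hμ k (hSdeg k hk)).2.1 l)).const_mul _))]
    simp_rw [MeasureTheory.integral_const_mul]
    rw [Finset.sum_eq_single l]
    · rw [(hμ l (hSdeg l hl)).2.2.2 l (hSdeg l hl), if_pos rfl, mul_one]
    · intro k hk hkl
      rw [(hμ k (hSdeg k hk)).2.2.2 l (hSdeg l hl), if_neg hkl, mul_zero]
    · intro h; exact absurd hl h
  have hmΨ : ∀ n, ∀ l ∈ S, (∫ z, Ψ n z * mpow z l) = ((2:ℝ)^(n * mdeg l))⁻¹ * m l := by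
    intro n l hl
    rcases Nat.eq_zero_or_pos n with h | h
    · rw [h, hΨ0]
      have h1 : ((2:ℝ)^(0 * mdeg l))⁻¹ = 1 := by norm_num
      rw [h1, one_mul, hm]
    · obtain ⟨m', rfl⟩ := Nat.exists_eq_succ_of_ne_zero (Nat.pos_iff_ne_zero.mp h)
      rw [hΨs1]
      exact hmΦ _ l hl
  have hmχ : ∀ n, ∀ l ∈ S, (∫ z, χ n z * mpow z l) = 0 := by
    intro n l hl
    have hint1 : Integrable (fun z => Ψ n z * mpow z l) :=
      intCC (hΨsmooth n).continuous (hΨcs n) l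
    have hint2 : Integrable
        (fun z => (((2:ℝ)^d)⁻¹ * Ψ (n+1) ((2:ℝ)⁻¹ • z)) * mpow z l) :=
      intCC (hscale_smooth (n+1)).continuous (hscale_cs n) l
    have h1 : ∀ z : Ed d, χ n z * mpow z l
        = Ψ n z * mpow z l - (((2:ℝ)^d)⁻¹ * Ψ (n+1) ((2:ℝ)⁻¹ • z)) * mpow z l := by
      intro z; rw [hχ]; simp only []; ring
    simp_rw [h1]
    rw [integral_sub hint1 hint2, hmΨ n l hl,
      integral_scale_half l, hmΨ (n+1) l hl]
    have halg : (2:ℝ)^(mdeg l) * (((2:ℝ)^((n+1) * mdeg l))⁻¹ * m l)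
        = ((2:ℝ)^(n * mdeg l))⁻¹ * m l := by
      rw [show (n+1) * mdeg l = n * mdeg l + mdeg l by ring, pow_add, mul_inv]
      have hne : ((2:ℝ)^(mdeg l)) ≠ 0 := by positivity
      field_simp
    rw [halg, sub_self]
  -- memberships
  have tsup_smul : ∀ F : Ed d → ℝ, tsupport (cst⁻¹ • F) ⊆ tsupport F := fun F =>
    closure_mono (Function.support_const_smul_subset _ _)
  have hmemχ : ∀ n, χ n ∈ cst • TBAnn d r (c:ℝ) := by
    intro n
    rw [Set.mem_smul_set_iff_inv_smul_mem₀ (ne_of_gt hcst0)]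
    have hsm : ContDiff ℝ (⊤:ℕ∞) (cst⁻¹ • χ n) := contDiff_const_smul_fun (hχsmooth n) _
    have hcs2 : HasCompactSupport (cst⁻¹ • χ n) :=
      IsCompact.of_isClosed_subset (hχcs n) (isClosed_tsupport _) (tsup_smul _)
    have hsupp2 : tsupport (cst⁻¹ • χ n) ⊆ closedBall (0:Ed d) 1 :=
      (tsup_smul _).trans (hχsupp n)
    have hder2 : ∀ j : MIdx d, mdeg j ≤ r → ∀ x, |mderiv j (cst⁻¹ • χ n) x| ≤ 1 := by
      intro j hj x
      rw [mderiv_smul j (hχsmooth n)]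
      rw [Pi.smul_apply, smul_eq_mul, abs_mul, abs_of_nonneg (by positivity : (0:ℝ) ≤ cst⁻¹)]
      calc cst⁻¹ * |mderiv j (χ n) x| ≤ cst⁻¹ * cst := by
            exact mul_le_mul_of_nonneg_left (hχbd n j hj x) (by positivity)
        _ = 1 := inv_mul_cancel₀ (ne_of_gt hcst0)
    refine ⟨⟨⟨hsm, hcs2⟩, hsupp2, hder2⟩, ⟨hsm, hcs2⟩, hsupp2, ?_⟩
    intro k hk
    have hkS : k ∈ S := (hmemS k).mpr (by exact_mod_cast hk)
    have h1 : ∀ z : Ed d, (cst⁻¹ • χ n) z * mpow z k = cst⁻¹ * (χ n z * mpow z k) := by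
      intro z; rw [Pi.smul_apply, smul_eq_mul]; ring
    simp_rw [h1]
    rw [MeasureTheory.integral_const_mul, hmχ n k hkS, mul_zero]
  have hmemψt : ψt ∈ cst • TB d r := by
    rw [Set.mem_smul_set_iff_inv_smul_mem₀ (ne_of_gt hcst0)]
    have hψtsm : ContDiff ℝ (⊤:ℕ∞) ψt := by rw [hψt]; exact hscale_smooth (M+1)
    have hψtsupp : tsupport ψt ⊆ closedBall (0:Ed d) 1 := by
      rw [hψt]; exact hscaled_supp M
    have hψtcs : HasCompactSupport ψt :=
      IsCompact.of_isClosed_subset (isCompact_closedBall _ _) (isClosed_tsupport _) hψtsupp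
    refine ⟨⟨contDiff_const_smul_fun hψtsm _,
      IsCompact.of_isClosed_subset hψtcs (isClosed_tsupport _) (tsup_smul _)⟩,
      (tsup_smul _).trans hψtsupp, ?_⟩
    intro j hj x
    rw [mderiv_smul j hψtsm]
    rw [Pi.smul_apply, smul_eq_mul, abs_mul, abs_of_nonneg (by positivity : (0:ℝ) ≤ cst⁻¹)]
    have hb : |mderiv j ψt x| ≤ A := by
      rw [hψt]
      exact hscaledbd M j hj x
    calc cst⁻¹ * |mderiv j ψt x| ≤ cst⁻¹ * cst := by
          refine mul_le_mul_of_nonneg_left (hb.trans ?_) (by positivity)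
          rw [hcst]; linarith
      _ = 1 := inv_mul_cancel₀ (ne_of_gt hcst0)
  -- final identity
  refine ⟨ψt, χ, hmemψt, fun n _ => hmemχ n, ?_⟩
  intro y
  have hterm : ∀ n : ℕ, scTF (χ n) 0 ((2:ℝ)^n) y
      = scTF (Ψ n) 0 ((2:ℝ)^n) y - scTF (Ψ (n+1)) 0 ((2:ℝ)^(n+1)) y := by
    intro n
    have e1 : χ n = fun z => Ψ n z - (fun w => ((2:ℝ)^d)⁻¹ * Ψ (n+1) ((2:ℝ)⁻¹ • w)) z := rfl
    rw [e1, scTF_sub, scTF_shift]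
  have hsum : ∑ n ∈ Finset.range (M+1), scTF (χ n) 0 ((2:ℝ)^n) y
      = scTF (Ψ 0) 0 ((2:ℝ)^(0:ℕ)) y - scTF (Ψ (M+1)) 0 ((2:ℝ)^(M+1)) y := by
    simp_rw [hterm]
    exact Finset.sum_range_sub' (fun n => scTF (Ψ n) 0 ((2:ℝ)^n) y) (M+1)
  have hψty : scTF ψt 0 ((2:ℝ)^M) y = scTF (Ψ (M+1)) 0 ((2:ℝ)^(M+1)) y := by
    rw [hψt]
    exact scTF_shift (Ψ (M+1)) M y
  rw [hsum, hψty, scTF_pow_zero, hΨ0]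
  ring
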